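/- For α > -1 and c > 0, the functions Q̃_n^{(α,c)}(x) := (d^n/dx^n)[w_{α+n,c}(x)] satisfy the structure relation x·(d/dx) Q̃_n^{(α,c)}(x) = −(1/c)·Q̃_{n+2}^{(α,c)}(x) + ((c(α+n+1)+1)/c)·Q̃_{n+1}^{(α,c)}(x) − (n+1)·Q̃_n^{(α,c)}(x) for all x > 0. -/

import Mathlib

noncomputable def besselI (ν z : ℝ) : ℝ :=
  (z / 2) ^ ν * ∑' i : ℕ, (z ^ 2 / 4) ^ i / (Real.Gamma (i + 1) * Real.Gamma (ν + i + 1))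

/-- The weight `w_{v,c}(x) = x^{v/2} e^{-c x} I_v(2√x)`. -/
noncomputable def wBessel (v c x : ℝ) : ℝ :=
  x ^ (v / 2) * Real.exp (-c * x) * besselI v (2 * Real.sqrt x)
/-- `Q̃_n^{(α,c)}(x) = (d^n/dx^n) w_{α+n,c}(x)`. -/
noncomputable def Qt (n : ℕ) (α c x : ℝ) : ℝ :=
  iteratedDeriv n (fun y => wBessel (α + n) c y) x

open Filter Topology Set

/-- The auxiliary "Bessel-Clifford" type series. -/
noncomputable def bS (v : ℝ) (x : ℝ) : ℝ :=
  ∑' i : ℕ, x ^ i / ((Nat.factorial i : ℝ) * Real.Gamma (v + i + 1))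

/-- Master summability estimate. -/
lemma summable_master (v R : ℝ) :
    Summable (fun i : ℕ =>
      ((i : ℝ) + 1) * |R| ^ i / ((Nat.factorial i : ℝ) * |Real.Gamma (v + i + 1)|)) := by
  apply summable_of_ratio_norm_eventually_le (r := 1/2) (by norm_num)
  have h1 : ∀ᶠ i : ℕ in atTop, (|v| + 1 : ℝ) ≤ i := by
    have := tendsto_natCast_atTop_atTop (R := ℝ)
    exact this.eventually_ge_atTop _
  have h2 : ∀ᶠ i : ℕ in atTop, (4 * |R| + 4 : ℝ) ≤ i := by
    have := tendsto_natCast_atTop_atTop (R := ℝ)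
    exact this.eventually_ge_atTop _
  filter_upwards [h1, h2] with i hi1 hi2
  have hvpos : (0 : ℝ) < v + i + 1 := by
    have := neg_abs_le v; linarith
  have hGrec : Real.Gamma (v + (i + 1 : ℕ) + 1) = (v + i + 1) * Real.Gamma (v + i + 1) := by
    have harg : v + ((i + 1 : ℕ) : ℝ) + 1 = (v + i + 1) + 1 := by push_cast; ring
    rw [harg, Real.Gamma_add_one hvpos.ne']
  have hfac : ((Nat.factorial (i + 1) : ℝ)) = (i + 1) * (Nat.factorial i : ℝ) := by
    push_cast [Nat.factorial_succ]; ring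
  set G := |Real.Gamma (v + i + 1)| with hG
  have hGnn : 0 ≤ G := abs_nonneg _
  have hterm : (((i + 1 : ℕ) : ℝ) + 1) * |R| ^ (i + 1) /
      ((Nat.factorial (i + 1) : ℝ) * |Real.Gamma (v + (i + 1 : ℕ) + 1)|)
      = (((i : ℝ) + 2) * |R| / (((i : ℝ) + 1) * ((i : ℝ) + 1) * (v + i + 1))) *
        (((i : ℝ) + 1) * |R| ^ i / ((Nat.factorial i : ℝ) * G)) := by
    rw [div_mul_div_comm]
    have e1 : ((i:ℝ)+2)*|R| * (((i:ℝ)+1)*|R|^i) = ((i:ℝ)+1) * (((i:ℝ)+2)*|R|^(i+1)) := by ring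
    have e2 : (((i:ℝ)+1)*((i:ℝ)+1)*(v+(i:ℝ)+1)) * ((Nat.factorial i : ℝ)*G)
        = ((i:ℝ)+1) * ((Nat.factorial (i+1) : ℝ) * |Real.Gamma (v + (i + 1 : ℕ) + 1)|) := by
      rw [hGrec, hfac, abs_mul, abs_of_pos hvpos, ← hG]; ring
    rw [e1, e2, mul_div_mul_left _ _ (by positivity : ((i:ℝ)+1) ≠ 0)]
    congr 1
    push_cast; ring
  have hnorm : ∀ a : ℝ, 0 ≤ a → ‖a‖ = a := fun a ha => Real.norm_of_nonneg ha
  have hpos0 : (0:ℝ) ≤ ((i : ℝ) + 1) * |R| ^ i / ((Nat.factorial i : ℝ) * G) := by positivity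
  have hpos1 : (0:ℝ) ≤ (((i + 1 : ℕ) : ℝ) + 1) * |R| ^ (i + 1) /
      ((Nat.factorial (i + 1) : ℝ) * |Real.Gamma (v + (i + 1 : ℕ) + 1)|) := by positivity
  rw [hnorm _ hpos1, hnorm _ hpos0, hterm]
  apply mul_le_mul_of_nonneg_right _ hpos0
  have hi4 : (4:ℝ) ≤ i := by have := abs_nonneg R; linarith
  rw [div_le_iff₀ (by positivity)]
  have hv2 : (2:ℝ) ≤ v + i + 1 := by have := neg_abs_le v; linarith
  have hR4 : 4*|R| ≤ (i:ℝ) - 4 := by linarith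
  have h5 : ((i:ℝ)+2)*(4*|R|) ≤ ((i:ℝ)+2)*((i:ℝ)-4) :=
    mul_le_mul_of_nonneg_left hR4 (by positivity)
  have h6 : 2*(((i:ℝ)+1)*((i:ℝ)+1)) ≤ ((i:ℝ)+1)*((i:ℝ)+1)*(v+(i:ℝ)+1) := by
    nlinarith [sq_nonneg ((i:ℝ)+1)]
  nlinarith [sq_nonneg ((i:ℝ))]

lemma summable_bS (v x : ℝ) :
    Summable (fun i : ℕ => x ^ i / ((Nat.factorial i : ℝ) * Real.Gamma (v + i + 1))) := by
  apply Summable.of_norm_bounded (summable_master v x)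
  intro i
  rw [norm_div, norm_mul, Real.norm_natCast]
  rw [show ‖x ^ i‖ = |x| ^ i by rw [Real.norm_eq_abs, abs_pow]]
  rw [Real.norm_eq_abs]
  gcongr
  nlinarith [pow_nonneg (abs_nonneg x) i, Nat.cast_nonneg (α := ℝ) i]

lemma summable_bS_weighted (v x : ℝ) :
    Summable (fun i : ℕ => (i : ℝ) * x ^ i / ((Nat.factorial i : ℝ) * Real.Gamma (v + i + 1))) := by
  apply Summable.of_norm_bounded (summable_master v x)
  intro i
  rw [norm_div, norm_mul, Real.norm_natCast, norm_mul, Real.norm_natCast]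
  rw [show ‖x ^ i‖ = |x| ^ i by rw [Real.norm_eq_abs, abs_pow]]
  rw [Real.norm_eq_abs]
  gcongr
  nlinarith [pow_nonneg (abs_nonneg x) i]

lemma summable_bS_deriv (v x : ℝ) :
    Summable (fun i : ℕ => (i : ℝ) * x ^ (i - 1) / ((Nat.factorial i : ℝ) * Real.Gamma (v + i + 1))) := by
  apply Summable.of_norm_bounded (summable_master v (|x| + 1))
  intro i
  rw [norm_div, norm_mul, Real.norm_natCast, norm_mul, Real.norm_natCast]
  rw [show ‖x ^ (i-1)‖ = |x| ^ (i-1) by rw [Real.norm_eq_abs, abs_pow]]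
  rw [Real.norm_eq_abs, abs_of_nonneg (by positivity : (0:ℝ) ≤ |x| + 1)]
  have hp : |x| ^ (i-1) ≤ (|x|+1) ^ i := by
    calc |x| ^ (i-1) ≤ (|x|+1) ^ (i-1) := by
          apply pow_le_pow_left₀ (abs_nonneg x) (by linarith)
      _ ≤ (|x|+1) ^ i := pow_le_pow_right₀ (by linarith [abs_nonneg x]) (Nat.sub_le i 1)
  gcongr
  linarith

/-- Index-shift evaluation of the weighted sum. -/
lemma tsum_shift (v x : ℝ) :
    ∑' i : ℕ, (i : ℝ) * x ^ i / ((Nat.factorial i : ℝ) * Real.Gamma (v + i + 1))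
      = x * bS (v + 1) x := by
  rw [Summable.tsum_eq_zero_add (summable_bS_weighted v x)]
  simp only [Nat.cast_zero, zero_mul, pow_zero, zero_div, zero_add]
  rw [bS, ← tsum_mul_left]
  apply tsum_congr
  intro i
  have harg : v + ((i + 1 : ℕ) : ℝ) + 1 = (v + 1) + i + 1 := by push_cast; ring
  have hfac : ((Nat.factorial (i + 1) : ℝ)) = ((i : ℝ) + 1) * (Nat.factorial i : ℝ) := by
    push_cast [Nat.factorial_succ]; ring
  rw [harg, hfac]
  rw [show ((i + 1 : ℕ) : ℝ) = (i : ℝ) + 1 by push_cast; ring]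
  rw [mul_assoc, mul_div_mul_left _ _ (by positivity : ((i:ℝ)+1) ≠ 0)]
  rw [pow_succ', mul_div_assoc]

lemma tsum_shift' (v x : ℝ) :
    ∑' i : ℕ, (i : ℝ) * x ^ (i - 1) / ((Nat.factorial i : ℝ) * Real.Gamma (v + i + 1))
      = bS (v + 1) x := by
  rw [Summable.tsum_eq_zero_add (summable_bS_deriv v x)]
  simp only [Nat.cast_zero, zero_mul, zero_div, zero_add]
  rw [bS]
  apply tsum_congr
  intro i
  have harg : v + ((i + 1 : ℕ) : ℝ) + 1 = (v + 1) + i + 1 := by push_cast; ring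
  have hfac : ((Nat.factorial (i + 1) : ℝ)) = ((i : ℝ) + 1) * (Nat.factorial i : ℝ) := by
    push_cast [Nat.factorial_succ]; ring
  rw [harg, hfac]
  rw [show ((i + 1 : ℕ) : ℝ) = (i : ℝ) + 1 by push_cast; ring]
  rw [show (i + 1) - 1 = i from rfl]
  rw [mul_assoc, mul_div_mul_left _ _ (by positivity : ((i:ℝ)+1) ≠ 0)]

/-- Contiguous relation for `bS`. -/
lemma bS_contig (v x : ℝ) : bS v x = (v + 1) * bS (v + 1) x + x * bS (v + 2) x := by
  have key : ∀ i : ℕ, x ^ i / ((Nat.factorial i : ℝ) * Real.Gamma (v + i + 1))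
      = (v + 1) * (x ^ i / ((Nat.factorial i : ℝ) * Real.Gamma ((v + 1) + i + 1)))
        + (i : ℝ) * x ^ i / ((Nat.factorial i : ℝ) * Real.Gamma ((v + 1) + i + 1)) := by
    intro i
    rw [show (v + 1) * (x ^ i / ((Nat.factorial i : ℝ) * Real.Gamma ((v + 1) + i + 1)))
        = ((v + 1) * x ^ i) / ((Nat.factorial i : ℝ) * Real.Gamma ((v + 1) + i + 1)) from
      (mul_div_assoc _ _ _).symm]
    rw [← add_div]
    rw [show (v + 1) * x ^ i + (i : ℝ) * x ^ i = (v + (i:ℝ) + 1) * x ^ i by ring]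
    have harg : (v + 1) + (i:ℝ) + 1 = (v + (i:ℝ) + 1) + 1 := by ring
    rw [harg]
    by_cases h : v + (i:ℝ) + 1 = 0
    · rw [h]
      simp [Real.Gamma_zero]
    · rw [Real.Gamma_add_one h]
      rw [show (Nat.factorial i : ℝ) * ((v + (i:ℝ) + 1) * Real.Gamma (v + (i:ℝ) + 1))
          = (v + (i:ℝ) + 1) * ((Nat.factorial i : ℝ) * Real.Gamma (v + (i:ℝ) + 1)) by ring]
      rw [mul_div_mul_left _ _ h]
  rw [bS, tsum_congr key]
  rw [Summable.tsum_add ((summable_bS (v+1) x).mul_left (v+1)) (summable_bS_weighted (v+1) x)]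
  rw [tsum_mul_left, tsum_shift (v+1) x]
  rw [show (v + 1) + 1 = v + 2 by ring]
  rfl

lemma wBessel_eq (v c : ℝ) {x : ℝ} (hx : 0 < x) :
    wBessel v c x = x ^ v * Real.exp (-c * x) * bS v x := by
  unfold wBessel besselI bS
  have h1 : (2 * Real.sqrt x / 2) = Real.sqrt x := by ring
  have h2 : ((2 * Real.sqrt x) ^ 2 / 4) = x := by
    rw [mul_pow, Real.sq_sqrt hx.le]; ring
  rw [h1, h2]
  have h3 : Real.sqrt x ^ v = x ^ (v / 2) := by
    rw [Real.sqrt_eq_rpow, ← Real.rpow_mul hx.le]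
    congr 1; ring
  rw [h3]
  have h4 : ∀ i : ℕ, x ^ i / (Real.Gamma ((i : ℝ) + 1) * Real.Gamma (v + i + 1))
      = x ^ i / ((Nat.factorial i : ℝ) * Real.Gamma (v + i + 1)) := by
    intro i; rw [Real.Gamma_nat_eq_factorial]
  rw [tsum_congr h4]
  rw [show x ^ (v/2) * Real.exp (-c*x) * (x ^ (v/2) *
        ∑' i : ℕ, x ^ i / ((Nat.factorial i : ℝ) * Real.Gamma (v + i + 1)))
      = (x ^ (v/2) * x ^ (v/2)) * Real.exp (-c*x) *
        ∑' i : ℕ, x ^ i / ((Nat.factorial i : ℝ) * Real.Gamma (v + i + 1)) by ring]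
  rw [← Real.rpow_add hx]
  norm_num

lemma hasDerivAt_bS (v x : ℝ) : HasDerivAt (fun y => bS v y) (bS (v + 1) x) x := by
  set R : ℝ := |x| + 1 with hR
  have hxball : x ∈ Metric.ball (0:ℝ) R := by
    simp only [Metric.mem_ball, Real.dist_eq, sub_zero]
    rw [hR]; linarith [abs_nonneg x]
  have key := hasDerivAt_of_tendstoUniformlyOn (l := atTop) Metric.isOpen_ball
    (f := fun N (y : ℝ) => ∑ i ∈ Finset.range N,
        y ^ i / ((Nat.factorial i : ℝ) * Real.Gamma (v + i + 1)))
    (f' := fun N (y : ℝ) => ∑ i ∈ Finset.range N,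
        (i : ℝ) * y ^ (i - 1) / ((Nat.factorial i : ℝ) * Real.Gamma (v + i + 1)))
    (g := fun y => bS v y)
    (g' := fun y => ∑' i : ℕ, (i : ℝ) * y ^ (i - 1) / ((Nat.factorial i : ℝ) * Real.Gamma (v + i + 1)))
    ?_ ?_ ?_ hxball
  · have key2 : HasDerivAt (fun y => bS v y)
        (∑' i : ℕ, (i : ℝ) * x ^ (i - 1) / ((Nat.factorial i : ℝ) * Real.Gamma (v + i + 1))) x := key
    rw [tsum_shift' v x] at key2; exact key2
  · apply tendstoUniformlyOn_tsum_nat (u := fun i : ℕ =>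
      ((i : ℝ) + 1) * |R| ^ i / ((Nat.factorial i : ℝ) * |Real.Gamma (v + i + 1)|))
      (summable_master v R)
    intro i y hy
    have hyR : |y| ≤ R := by
      simp only [Metric.mem_ball, Real.dist_eq, sub_zero] at hy
      exact hy.le
    have hR1 : (1:ℝ) ≤ R := by rw [hR]; linarith [abs_nonneg x]
    rw [norm_div, norm_mul, Real.norm_natCast, norm_mul, Real.norm_natCast,
      Real.norm_eq_abs, Real.norm_eq_abs, abs_pow, abs_of_nonneg (by linarith : (0:ℝ) ≤ R)]
    have hp : |y| ^ (i - 1) ≤ R ^ i := by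
      calc |y| ^ (i-1) ≤ R ^ (i-1) := pow_le_pow_left₀ (abs_nonneg y) hyR _
        _ ≤ R ^ i := pow_le_pow_right₀ hR1 (Nat.sub_le i 1)
    gcongr
    linarith
  · filter_upwards with N y _
    apply HasDerivAt.fun_sum
    intro i _
    exact (hasDerivAt_pow i y).div_const _
  · intro y _
    exact (summable_bS v y).hasSum.tendsto_sum_nat

lemma contDiff_bS (m : ℕ) : ∀ v : ℝ, ContDiff ℝ m (fun y => bS v y) := by
  induction m with
  | zero =>
    intro v
    rw [show ((0:ℕ) : WithTop ℕ∞) = 0 by norm_cast, contDiff_zero]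
    exact continuous_iff_continuousAt.2 fun y => (hasDerivAt_bS v y).continuousAt
  | succ m ih =>
    intro v
    rw [show (((m+1:ℕ)) : WithTop ℕ∞) = (m : WithTop ℕ∞) + 1 by push_cast; ring]
    rw [contDiff_succ_iff_deriv]
    refine ⟨fun y => (hasDerivAt_bS v y).differentiableAt, ?_, ?_⟩
    · intro h
      simp at h
    · have hd : deriv (fun y => bS v y) = fun y => bS (v+1) y :=
        funext fun y => (hasDerivAt_bS v y).deriv
      rw [hd]
      exact ih (v+1)

/-- Recurrence `x w_v = (v+1) w_{v+1} + w_{v+2}`. -/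
lemma wBessel_rec (v c : ℝ) {x : ℝ} (hx : 0 < x) :
    x * wBessel v c x = (v + 1) * wBessel (v + 1) c x + wBessel (v + 2) c x := by
  rw [wBessel_eq v c hx, wBessel_eq (v+1) c hx, wBessel_eq (v+2) c hx, bS_contig v x]
  have h1 : x ^ (v+1) = x ^ v * x := Real.rpow_add_one hx.ne' v
  have h2 : x ^ (v+2) = x ^ v * x * x := by
    rw [show v + 2 = (v+1) + 1 by ring, Real.rpow_add_one hx.ne', h1]
  rw [h1, h2]; ring

/-- Derivative recurrence `w_v' = w_{v-1} - c w_v`. -/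
lemma hasDerivAt_wBessel (v c : ℝ) {x : ℝ} (hx : 0 < x) :
    HasDerivAt (fun y => wBessel v c y) (wBessel (v - 1) c x - c * wBessel v c x) x := by
  have h1 : HasDerivAt (fun y : ℝ => y ^ v) (v * x ^ (v - 1)) x :=
    Real.hasDerivAt_rpow_const (Or.inl hx.ne')
  have h2 : HasDerivAt (fun y : ℝ => Real.exp (-c * y)) (Real.exp (-c * x) * (-c * 1)) x :=
    ((hasDerivAt_id x).const_mul (-c)).exp
  have h3 := hasDerivAt_bS v x
  have hmod := (h1.mul h2).mul h3
  have heq : (v * x ^ (v-1) * Real.exp (-c*x) + x ^ v * (Real.exp (-c*x) * (-c*1))) * bS v x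
      + x ^ v * Real.exp (-c*x) * bS (v+1) x
      = wBessel (v - 1) c x - c * wBessel v c x := by
    rw [wBessel_eq (v-1) c hx, wBessel_eq v c hx]
    have hcontig : bS (v-1) x = v * bS v x + x * bS (v+1) x := by
      have := bS_contig (v-1) x
      rw [show v - 1 + 1 = v by ring, show v - 1 + 2 = v + 1 by ring] at this
      exact this
    rw [hcontig]
    have hxv : x ^ v = x ^ (v-1) * x := by
      rw [← Real.rpow_add_one hx.ne' (v-1), show v - 1 + 1 = v by ring]
    rw [hxv]; ring
  simp only [Pi.mul_apply] at hmod
  rw [heq] at hmod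
  apply hmod.congr_of_eventuallyEq
  filter_upwards [isOpen_Ioi.mem_nhds hx] with y hy
  exact wBessel_eq v c hy

lemma contDiffOn_wBessel (m : ℕ) (v c : ℝ) :
    ContDiffOn ℝ m (fun y => wBessel v c y) (Set.Ioi (0:ℝ)) := by
  apply ContDiffOn.congr (f := fun y : ℝ => y ^ v * Real.exp (-c * y) * bS v y)
  · apply ContDiffOn.mul
    apply ContDiffOn.mul
    · intro y hy
      exact (Real.contDiffAt_rpow_const_of_ne (ne_of_gt hy)).contDiffWithinAt
    · exact (Real.contDiff_exp.comp (contDiff_const.mul contDiff_id)).contDiffOn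
    · exact (contDiff_bS m v).contDiffOn
  · intro y hy
    exact wBessel_eq v c hy

lemma iter_eq (n : ℕ) (f : ℝ → ℝ) {x : ℝ} (hx : x ∈ Set.Ioi (0:ℝ)) :
    iteratedDerivWithin n f (Set.Ioi 0) x = iteratedDeriv n f x := by
  rw [iteratedDerivWithin_eq_iteratedFDerivWithin, iteratedDeriv_eq_iteratedFDeriv,
    iteratedFDerivWithin_of_isOpen n isOpen_Ioi hx]

/-- Leibniz rule for multiplication by the identity. -/
lemma leibniz_xmul : ∀ (n : ℕ) (g : ℝ → ℝ), (∀ m : ℕ, ContDiffOn ℝ m g (Set.Ioi 0)) →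
    ∀ x : ℝ, x ∈ Set.Ioi (0:ℝ) →
    iteratedDerivWithin (n+1) (fun y => y * g y) (Set.Ioi 0) x
      = x * iteratedDerivWithin (n+1) g (Set.Ioi 0) x
        + ((n:ℝ)+1) * iteratedDerivWithin n g (Set.Ioi 0) x := by
  have hs : UniqueDiffOn ℝ (Set.Ioi (0:ℝ)) := isOpen_Ioi.uniqueDiffOn
  have hder : ∀ (g : ℝ → ℝ), (∀ m : ℕ, ContDiffOn ℝ m g (Set.Ioi 0)) →
      ∀ y ∈ Set.Ioi (0:ℝ), derivWithin (fun z => z * g z) (Set.Ioi 0) y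
        = g y + y * derivWithin g (Set.Ioi 0) y := by
    intro g hg y hy
    have hgd : DifferentiableWithinAt ℝ g (Set.Ioi 0) y := by
      have := (hg 1).differentiableOn (by norm_cast) y hy
      exact this
    have hid : HasDerivWithinAt (fun z : ℝ => z) 1 (Set.Ioi 0) y := hasDerivWithinAt_id y _
    have := hid.mul hgd.hasDerivWithinAt
    have h2 := this.derivWithin (hs.uniqueDiffWithinAt hy)
    rw [show (fun z => z * g z) = (fun z => z) * g from rfl, h2]; ring
  have hdg_smooth : ∀ (g : ℝ → ℝ), (∀ m : ℕ, ContDiffOn ℝ m g (Set.Ioi 0)) →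
      (∀ m : ℕ, ContDiffOn ℝ m (derivWithin g (Set.Ioi 0)) (Set.Ioi 0)) := by
    intro g hg m
    apply (hg (m+1)).derivWithin hs
    norm_cast
  intro n
  induction n with
  | zero =>
    intro g hg x hx
    rw [iteratedDerivWithin_one,
      iteratedDerivWithin_one, iteratedDerivWithin_zero,
      hder g hg x hx]
    ring
  | succ n ih =>
    intro g hg x hx
    have hxg_smooth : ∀ m : ℕ, ContDiffOn ℝ m (fun y => y * derivWithin g (Set.Ioi 0) y) (Set.Ioi 0) :=
      fun m => (contDiffOn_id).mul (hdg_smooth g hg m)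
    rw [iteratedDerivWithin_succ']
    rw [iteratedDerivWithin_congr (hder g hg) hx
      (f := derivWithin (fun z => z * g z) (Set.Ioi 0))
      (g := fun y => g y + y * derivWithin g (Set.Ioi 0) y)]
    rw [show (fun y => g y + y * derivWithin g (Set.Ioi 0) y)
        = g + (fun y => y * derivWithin g (Set.Ioi 0) y) from rfl]
    rw [iteratedDerivWithin_add hx hs ((hg (n+1)) x hx) (hxg_smooth (n+1) x hx)]
    rw [ih (derivWithin g (Set.Ioi 0)) (hdg_smooth g hg) x hx]
    rw [← iteratedDerivWithin_succ', ← iteratedDerivWithin_succ']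
    push_cast; ring

theorem Qt_structure_relation (n : ℕ) (α c x : ℝ) (hα : -1 < α) (hc : 0 < c) (hx : 0 < x) :
    x * deriv (fun y => Qt n α c y) x =
      -(1 / c) * Qt (n + 2) α c x + ((c * (α + n + 1) + 1) / c) * Qt (n + 1) α c x -
        ((n : ℝ) + 1) * Qt n α c x := by
  have hs : UniqueDiffOn ℝ (Set.Ioi (0:ℝ)) := isOpen_Ioi.uniqueDiffOn
  have hxs : x ∈ Set.Ioi (0:ℝ) := hx
  have hQ0 : Qt n α c x
      = iteratedDerivWithin n (fun y => wBessel (α + n) c y) (Set.Ioi 0) x := by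
    unfold Qt; rw [iter_eq n _ hxs]
  have hQ1 : Qt (n+1) α c x
      = iteratedDerivWithin (n+1) (fun y => wBessel (α + n + 1) c y) (Set.Ioi 0) x := by
    unfold Qt; push_cast; rw [show α + ((n:ℝ)+1) = α + n + 1 by ring, iter_eq (n+1) _ hxs]
  have hQ2 : Qt (n+2) α c x
      = iteratedDerivWithin (n+2) (fun y => wBessel (α + n + 2) c y) (Set.Ioi 0) x := by
    unfold Qt; push_cast; rw [show α + ((n:ℝ)+2) = α + n + 2 by ring, iter_eq (n+2) _ hxs]
  have hL : deriv (fun y => Qt n α c y) x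
      = iteratedDerivWithin (n+1) (fun y => wBessel (α + n) c y) (Set.Ioi 0) x := by
    have h0 : (fun y => Qt n α c y) = iteratedDeriv n (fun y => wBessel (α + n) c y) := rfl
    rw [h0, ← iteratedDeriv_succ, iter_eq (n+1) _ hxs]
  -- Leibniz
  have hLb := leibniz_xmul n (fun y => wBessel (α + n) c y)
    (fun m => contDiffOn_wBessel m _ c) x hxs
  -- recurrence as EqOn
  have hEq : Set.EqOn (fun y => y * wBessel (α + n) c y)
      (fun y => (α + n + 1) * wBessel (α + n + 1) c y + wBessel (α + n + 2) c y)
      (Set.Ioi 0) := by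
    intro y hy
    exact wBessel_rec (α + n) c hy
  have hcongr := iteratedDerivWithin_congr hEq (n := n+1) hxs
  have hadd : iteratedDerivWithin (n+1)
      (fun y => (α + n + 1) * wBessel (α + n + 1) c y + wBessel (α + n + 2) c y) (Set.Ioi 0) x
      = (α + n + 1) * iteratedDerivWithin (n+1) (fun y => wBessel (α + n + 1) c y) (Set.Ioi 0) x
        + iteratedDerivWithin (n+1) (fun y => wBessel (α + n + 2) c y) (Set.Ioi 0) x := by
    rw [show (fun y => (α + n + 1) * wBessel (α + n + 1) c y + wBessel (α + n + 2) c y)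
        = ((fun y => (α + n + 1) * wBessel (α + n + 1) c y)
            + (fun y => wBessel (α + n + 2) c y)) from rfl]
    rw [iteratedDerivWithin_add hxs hs
      ((contDiffOn_const.mul (contDiffOn_wBessel (n+1) _ c)) x hxs) ((contDiffOn_wBessel (n+1) _ c) x hxs)]
    rw [iteratedDerivWithin_const_mul hxs hs _ ((contDiffOn_wBessel (n+1) _ c) x hxs)]
  -- derivative recurrence for the top weight
  have hA : Set.EqOn (derivWithin (fun y => wBessel (α + n + 2) c y) (Set.Ioi 0))
      (fun y => wBessel (α + n + 1) c y - c * wBessel (α + n + 2) c y) (Set.Ioi 0) := by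
    intro y hy
    rw [derivWithin_of_isOpen isOpen_Ioi hy]
    have h := (hasDerivAt_wBessel (α + n + 2) c hy).deriv
    rw [show α + (n:ℝ) + 2 - 1 = α + n + 1 by ring] at h
    simpa using h
  have hstep : iteratedDerivWithin (n+2) (fun y => wBessel (α + n + 2) c y) (Set.Ioi 0) x
      = iteratedDerivWithin (n+1) (fun y => wBessel (α + n + 1) c y) (Set.Ioi 0) x
        - c * iteratedDerivWithin (n+1) (fun y => wBessel (α + n + 2) c y) (Set.Ioi 0) x := by
    rw [show n+2 = (n+1)+1 from rfl, iteratedDerivWithin_succ']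
    rw [iteratedDerivWithin_congr hA hxs]
    rw [show (fun y => wBessel (α + n + 1) c y - c * wBessel (α + n + 2) c y)
        = ((fun y => wBessel (α + n + 1) c y) - (fun y => c * wBessel (α + n + 2) c y)) from rfl]
    rw [iteratedDerivWithin_sub hxs hs ((contDiffOn_wBessel (n+1) _ c) x hxs)
      ((contDiffOn_const.mul (contDiffOn_wBessel (n+1) _ c)) x hxs)]
    rw [iteratedDerivWithin_const_mul hxs hs _ ((contDiffOn_wBessel (n+1) _ c) x hxs)]
  set A0 := iteratedDerivWithin n (fun y => wBessel (α + n) c y) (Set.Ioi 0) x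
  set B0 := iteratedDerivWithin (n+1) (fun y => wBessel (α + n) c y) (Set.Ioi 0) x
  set B1 := iteratedDerivWithin (n+1) (fun y => wBessel (α + n + 1) c y) (Set.Ioi 0) x
  set P := iteratedDerivWithin (n+1) (fun y => wBessel (α + n + 2) c y) (Set.Ioi 0) x
  set B2 := iteratedDerivWithin (n+2) (fun y => wBessel (α + n + 2) c y) (Set.Ioi 0) x
  have hxB : x * B0 + ((n:ℝ)+1) * A0 = (α + n + 1) * B1 + P := by
    rw [← hLb, hcongr, hadd]
  have hP : P = (B1 - B2) / c := by
    rw [eq_div_iff hc.ne']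
    rw [hstep]; ring
  rw [hL, hQ0, hQ1, hQ2]
  have hx0 : x * B0 = (α + n + 1) * B1 + P - ((n:ℝ)+1) * A0 := by linarith
  rw [hx0, hP]
  field_simp
  ring
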